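/- Suppose additionally that B(t) is defined by B(t) = Q(t) + B̄_min + V·P_max + C_dis, that B_min(t) ≤ B̄_min and B̄_max ≤ B_max(t) for all t, and that the initial state of charge satisfies B̄_min ≤ B(0) ≤ B̄_max. Then for all t ∈ ℕ, the time-varying battery capacity constraints are respected: B_min(t) ≤ B(t) ≤ B_max(t). -/
import Mathlib

/-- Under the online algorithm, the state of charge respects
the time-varying battery capacity constraints at all times. -/
theorem soc_respects_capacity_bounds
    (Pmax Cchar Cdis Bminbar Bmaxbar V : ℝ)
    (hPmax : 0 < Pmax) (hCchar : 0 ≤ Cchar) (hCdis : 0 ≤ Cdis)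
    (hV0 : 0 < V)
    (hVmax : V ≤ (Bmaxbar - Bminbar - Cdis - Cchar) / Pmax)
    (Gb Rb Be P Q : ℕ → ℝ)
    (hGb : ∀ t : ℕ, 0 ≤ Gb t) (hRb : ∀ t : ℕ, 0 ≤ Rb t)
    (hchar0 : ∀ t : ℕ, 0 ≤ Gb t + Rb t)
    (hchar : ∀ t : ℕ, Gb t + Rb t ≤ Cchar)
    (hBe0 : ∀ t : ℕ, 0 ≤ Be t) (hBe : ∀ t : ℕ, Be t ≤ Cdis)
    (hP0 : ∀ t : ℕ, 0 ≤ P t) (hPm : ∀ t : ℕ, P t ≤ Pmax)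
    (hQ : ∀ t : ℕ, Q (t + 1) = Q t + Gb t + Rb t - Be t)
    (halg1 : ∀ t : ℕ, Q t + V * P t ≤ 0 → Be t = 0)
    (halg2 : ∀ t : ℕ, 0 < Q t → Gb t = 0 ∧ Rb t = 0)
    (B Bmin Bmax : ℕ → ℝ)
    (hBdef : ∀ t : ℕ, B t = Q t + Bminbar + V * Pmax + Cdis)
    (hBmin : ∀ t : ℕ, Bmin t ≤ Bminbar)
    (hBmax : ∀ t : ℕ, Bmaxbar ≤ Bmax t)
    (hB0lb : Bminbar ≤ B 0) (hB0ub : B 0 ≤ Bmaxbar) :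
    ∀ t : ℕ, Bmin t ≤ B t ∧ B t ≤ Bmax t := by
  have hVP : V * Pmax ≤ Bmaxbar - Bminbar - Cdis - Cchar := by
    rw [le_div_iff₀ hPmax] at hVmax
    nlinarith
  have key : ∀ t, -(V * Pmax) - Cdis ≤ Q t ∧ Q t ≤ Bmaxbar - Bminbar - V * Pmax - Cdis := by
    intro t
    induction t with
    | zero =>
      have h := hBdef 0
      constructor <;> linarith
    | succ n ih =>
      obtain ⟨ihl, ihu⟩ := ih
      have hq := hQ n
      constructor
      · by_cases h : Q n + V * P n ≤ 0
        · rw [hq, halg1 n h]; linarith [hGb n, hRb n]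
        · push_neg at h
          have h1 : -(V * Pmax) ≤ -(V * P n) := by
            have := hPm n
            nlinarith
          have := hBe n
          rw [hq]; linarith [hGb n, hRb n]
      · by_cases h : 0 < Q n
        · obtain ⟨h1, h2⟩ := halg2 n h
          rw [hq, h1, h2]; linarith [hBe0 n]
        · push_neg at h
          rw [hq]; linarith [hchar n, hBe0 n]
  intro t
  obtain ⟨hl, hu⟩ := key t
  have h := hBdef t
  exact ⟨by linarith [hBmin t], by linarith [hBmax t]⟩
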